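/- arXiv:1001.3971 — 2 statements merged into one kernel-verified Lean document; each statement's English description precedes it below -/
import Mathlib

section
/- The SLD information is bounded by the C_L quantum information (Lemma): In the spectral-family setup, C_L(θ) − H(θ) = 8 Σ over ordered pairs (j,k) with j ≠ k and p_j(θ)+p_k(θ) > 0 of (p_j(θ) p_k(θ)/(p_j(θ)+p_k(θ))) |⟨w_j'(θ), w_k(θ)⟩|². In particular H(θ) ≤ C_L(θ), with equality if and only if ⟨w_j'(θ), w_k(θ)⟩ = 0 for all j ≠ k with p_j(θ) > 0 and p_k(θ) > 0. -/
open scoped BigOperators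

noncomputable section

/-- The Hermitian inner product on `Fin d → ℂ`, conjugate-linear in the first argument. -/
def inn {d : ℕ} (x y : Fin d → ℂ) : ℂ := ∑ i, (starRingEnd ℂ) (x i) * y i

lemma inn_conj {d : ℕ} (x y : Fin d → ℂ) :
    inn x y = (starRingEnd ℂ) (inn y x) := by
  simp [inn, map_sum, mul_comm]

lemma inn_hasDerivAt {d : ℕ} {f g : ℝ → (Fin d → ℂ)} {f' g' : Fin d → ℂ} {θ : ℝ}
    (hf : HasDerivAt f f' θ) (hg : HasDerivAt g g' θ) :
    HasDerivAt (fun t => inn (f t) (g t)) (inn f' (g θ) + inn (f θ) g') θ := by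
  have h : HasDerivAt (fun t => ∑ i, (starRingEnd ℂ) (f t i) * g t i)
      (∑ i : Fin d, ((starRingEnd ℂ) (f' i) * g θ i + (starRingEnd ℂ) (f θ i) * g' i)) θ := by
    apply HasDerivAt.fun_sum
    intro i _
    have hfi : HasDerivAt (fun t => f t i) (f' i) θ := by
      exact hasDerivAt_pi.mp hf i
    have hgi : HasDerivAt (fun t => g t i) (g' i) θ := by
      exact hasDerivAt_pi.mp hg i
    exact hfi.star.mul hgi
  simpa [inn, Finset.sum_add_distrib] using h

/-- **The SLD information is bounded by the `C_L` quantum information.**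
`C_L(θ) − H(θ)` equals the displayed nonnegative sum over ordered pairs; in particular
`H(θ) ≤ C_L(θ)`, with equality iff `⟨w_j'(θ), w_k(θ)⟩ = 0` for all `j ≠ k` with
`p_j(θ) > 0` and `p_k(θ) > 0`. -/
theorem sld_le_CL {d : ℕ} (hd : 1 ≤ d)
    (p : Fin d → ℝ → ℝ) (w : Fin d → ℝ → (Fin d → ℂ))
    (p' : Fin d → ℝ → ℝ) (w' : Fin d → ℝ → (Fin d → ℂ))
    (horth : ∀ θ (j k : Fin d), inn (w j θ) (w k θ) = if j = k then 1 else 0)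
    (hpnn : ∀ (k : Fin d) θ, 0 ≤ p k θ) (hpsum : ∀ θ, ∑ k, p k θ = 1)
    (hp' : ∀ (k : Fin d) θ, HasDerivAt (p k) (p' k θ) θ)
    (hw' : ∀ (k : Fin d) θ, HasDerivAt (w k) (w' k θ) θ)
    (hdich : ∀ k : Fin d, (∀ θ, 0 < p k θ) ∨ (∀ θ, p k θ = 0))
    (CL H : ℝ → ℝ)
    (hCL : ∀ θ, CL θ = (∑ k, if 0 < p k θ then (p' k θ) ^ 2 / p k θ else 0)
        + 4 * ∑ j, ∑ k, (if j < k ∧ 0 < p j θ + p k θ then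
            (p j θ + p k θ) * ‖inn (w' j θ) (w k θ)‖ ^ 2 else 0))
    (hH : ∀ θ, H θ = (∑ k, if 0 < p k θ then (p' k θ) ^ 2 / p k θ else 0)
        + 4 * ∑ j, ∑ k, (if j < k ∧ 0 < p j θ + p k θ then
            (p j θ - p k θ) ^ 2 / (p j θ + p k θ) *
              ‖inn (w' j θ) (w k θ)‖ ^ 2 else 0)) :
    ∀ θ : ℝ,
      (CL θ - H θ = 8 * ∑ j, ∑ k, (if j ≠ k ∧ 0 < p j θ + p k θ then
          p j θ * p k θ / (p j θ + p k θ) *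
            ‖inn (w' j θ) (w k θ)‖ ^ 2 else 0)) ∧
      H θ ≤ CL θ ∧
      (H θ = CL θ ↔ ∀ j k : Fin d, j ≠ k → 0 < p j θ → 0 < p k θ →
        inn (w' j θ) (w k θ) = 0) := by
  intro θ
  -- skew symmetry of the derivative inner products
  have hskew : ∀ j k : Fin d, inn (w' j θ) (w k θ) + inn (w j θ) (w' k θ) = 0 := by
    intro j k
    have h1 := inn_hasDerivAt (hw' j θ) (hw' k θ)
    have h2 : (fun t => inn (w j t) (w k t)) = fun _ : ℝ => (if j = k then (1:ℂ) else 0) := by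
      funext t; exact horth t j k
    rw [h2] at h1
    exact h1.unique (hasDerivAt_const θ _)
  have hA : ∀ j k : Fin d,
      ‖inn (w' j θ) (w k θ)‖ ^ 2 = ‖inn (w' k θ) (w j θ)‖ ^ 2 := by
    intro j k
    have h3 : inn (w' j θ) (w k θ) = - (starRingEnd ℂ) (inn (w' k θ) (w j θ)) := by
      have := hskew j k
      rw [inn_conj (w j θ) (w' k θ)] at this
      exact eq_neg_of_add_eq_zero_left this
    rw [h3]; simp
  set f : Fin d → Fin d → ℝ := fun j k => if j ≠ k ∧ 0 < p j θ + p k θ then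
      p j θ * p k θ / (p j θ + p k θ) * ‖inn (w' j θ) (w k θ)‖ ^ 2 else 0 with hf
  set g : Fin d → Fin d → ℝ := fun j k => if j < k ∧ 0 < p j θ + p k θ then
      p j θ * p k θ / (p j θ + p k θ) * ‖inn (w' j θ) (w k θ)‖ ^ 2 else 0 with hg
  have hfsymm : ∀ j k, f j k = f k j := by
    intro j k
    simp only [hf]
    rw [hA j k]
    by_cases h : j ≠ k ∧ 0 < p j θ + p k θ
    · rw [if_pos h, if_pos ⟨h.1.symm, by linarith [h.2]⟩]
      ring_nf
    · rw [if_neg h, if_neg fun hc => h ⟨hc.1.symm, by linarith [hc.2]⟩]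
  have hFg : ∀ j k, (if j < k then f j k else 0) = g j k := by
    intro j k
    simp only [hf, hg]
    by_cases h : j < k
    · simp [h, h.ne]
    · simp [h]
  -- S = 2 T
  have hST : (∑ j, ∑ k, f j k) = 2 * ∑ j, ∑ k, g j k := by
    have e1 : (∑ j, ∑ k, f j k)
        = ∑ j, ∑ k, ((if j < k then f j k else 0) + (if k < j then f j k else 0)) := by
      refine Finset.sum_congr rfl fun j _ => Finset.sum_congr rfl fun k _ => ?_
      rcases lt_trichotomy j k with h | h | h
      · simp [h, asymm h]
      · subst h; simp [hf]
      · simp [h, asymm h]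
    rw [e1, Finset.sum_congr rfl fun j _ => Finset.sum_add_distrib, Finset.sum_add_distrib]
    have e2 : (∑ j, ∑ k, if k < j then f j k else 0) = ∑ j, ∑ k, if j < k then f j k else 0 := by
      rw [Finset.sum_comm]
      exact Finset.sum_congr rfl fun j _ => Finset.sum_congr rfl fun k _ => by rw [hfsymm k j]
    rw [e2]
    simp only [hFg]
    ring
  -- CL - H = 16 T
  have hdiff : CL θ - H θ = 16 * ∑ j, ∑ k, g j k := by
    rw [hCL θ, hH θ]
    have e3 : ∀ j k : Fin d,
        (if j < k ∧ 0 < p j θ + p k θ then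
            (p j θ + p k θ) * ‖inn (w' j θ) (w k θ)‖ ^ 2 else 0)
        - (if j < k ∧ 0 < p j θ + p k θ then
            (p j θ - p k θ) ^ 2 / (p j θ + p k θ) *
              ‖inn (w' j θ) (w k θ)‖ ^ 2 else 0) = 4 * g j k := by
      intro j k
      simp only [hg]
      by_cases h : j < k ∧ 0 < p j θ + p k θ
      · simp only [h, and_self, if_true]
        have hs : p j θ + p k θ ≠ 0 := ne_of_gt h.2
        field_simp
        ring
      · simp [h]
    have e4 : (∑ j, ∑ k, (if j < k ∧ 0 < p j θ + p k θ then
            (p j θ + p k θ) * ‖inn (w' j θ) (w k θ)‖ ^ 2 else 0))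
        - (∑ j, ∑ k, (if j < k ∧ 0 < p j θ + p k θ then
            (p j θ - p k θ) ^ 2 / (p j θ + p k θ) *
              ‖inn (w' j θ) (w k θ)‖ ^ 2 else 0))
        = 4 * ∑ j, ∑ k, g j k := by
      rw [← Finset.sum_sub_distrib]
      rw [Finset.sum_congr rfl fun j _ => (Finset.sum_sub_distrib _ _).symm]
      rw [Finset.sum_congr rfl fun j _ => Finset.sum_congr rfl fun k _ => e3 j k]
      rw [Finset.sum_congr rfl fun j _ => (Finset.mul_sum _ _ _).symm, ← Finset.mul_sum]
    linarith [e4]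
  have hf_nonneg : ∀ j k, 0 ≤ f j k := by
    intro j k
    simp only [hf]
    split_ifs with h
    · exact mul_nonneg (div_nonneg (mul_nonneg (hpnn j θ) (hpnn k θ)) h.2.le) (sq_nonneg _)
    · exact le_refl 0
  have hS_nonneg : (0:ℝ) ≤ ∑ j, ∑ k, f j k :=
    Finset.sum_nonneg fun j _ => Finset.sum_nonneg fun k _ => hf_nonneg j k
  have heq1 : CL θ - H θ = 8 * ∑ j, ∑ k, f j k := by rw [hdiff, hST]; ring
  refine ⟨heq1, by linarith, ?_⟩
  constructor
  · intro hEq j k hjk hpj hpk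
    have hS0 : (∑ j, ∑ k, f j k) = 0 := by linarith
    have hterm : f j k = 0 := by
      have h1 := (Finset.sum_eq_zero_iff_of_nonneg fun j _ =>
        Finset.sum_nonneg fun k _ => hf_nonneg j k).mp hS0 j (Finset.mem_univ j)
      exact (Finset.sum_eq_zero_iff_of_nonneg fun k _ => hf_nonneg j k).mp h1 k (Finset.mem_univ k)
    have hs : 0 < p j θ + p k θ := by linarith
    rw [show f j k = p j θ * p k θ / (p j θ + p k θ) * ‖inn (w' j θ) (w k θ)‖ ^ 2
      from by simp only [hf]; rw [if_pos ⟨hjk, hs⟩]] at hterm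
    have hpos : 0 < p j θ * p k θ / (p j θ + p k θ) := div_pos (mul_pos hpj hpk) hs
    have hA0 : ‖inn (w' j θ) (w k θ)‖ ^ 2 = 0 := by
      rcases mul_eq_zero.mp hterm with h | h
      · exact absurd h (ne_of_gt hpos)
      · exact h
    have := pow_eq_zero_iff (n := 2) (by norm_num) |>.mp hA0
    exact norm_eq_zero.mp this
  · intro hyp
    have hf0 : ∀ j k, f j k = 0 := by
      intro j k
      simp only [hf]
      split_ifs with h
      · obtain ⟨hjk, hs⟩ := h
        by_cases hpj : 0 < p j θ
        · by_cases hpk : 0 < p k θ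
          · rw [hyp j k hjk hpj hpk]; simp
          · have hz : p k θ = 0 := le_antisymm (not_lt.mp hpk) (hpnn k θ)
            rw [hz]; ring
        · have hz : p j θ = 0 := le_antisymm (not_lt.mp hpj) (hpnn j θ)
          rw [hz]; ring
      · rfl
    have : (∑ j, ∑ k, f j k) = 0 := by
      refine Finset.sum_eq_zero fun j _ => Finset.sum_eq_zero fun k _ => hf0 j k
    linarith
end
end

section
/- Attainability condition for commuting dependent unitary channels (Proposition): In the commuting-channels setup, for all m,n ∈ {1,…,d−1} one has ⟨∂_m ψ_θ, ∂_n ψ_θ⟩ = (δ_{mn}/d) · g_m'(θ_m)². In particular all these inner products are real, so Im⟨∂_m ψ_θ, ∂_n ψ_θ⟩ = 0 for all m,n (Matsumoto's condition for attainability of the SLD quantum information holds). -/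
open scoped BigOperators

noncomputable section

private lemma exp_mulVec_eigen {d : ℕ} (M : Matrix (Fin d) (Fin d) ℂ) (v : Fin d → ℂ) (μ : ℂ)
    (h : M.mulVec v = μ • v) :
    (NormedSpace.exp M).mulVec v = Complex.exp μ • v := by
  letI : SeminormedRing (Matrix (Fin d) (Fin d) ℂ) := Matrix.linftyOpSemiNormedRing
  letI : NormedRing (Matrix (Fin d) (Fin d) ℂ) := Matrix.linftyOpNormedRing
  letI : NormedAlgebra ℂ (Matrix (Fin d) (Fin d) ℂ) := Matrix.linftyOpNormedAlgebra
  have hpow : ∀ k : ℕ, (M ^ k).mulVec v = μ ^ k • v := by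
    intro k
    induction k with
    | zero => simp [Matrix.one_mulVec]
    | succ k ih =>
      rw [pow_succ, ← Matrix.mulVec_mulVec, h, Matrix.mulVec_smul, ih, smul_smul, pow_succ,
        mul_comm]
  let L : Matrix (Fin d) (Fin d) ℂ →ₗ[ℂ] (Fin d → ℂ) :=
    { toFun := fun A => A.mulVec v
      map_add' := fun A B => Matrix.add_mulVec A B v
      map_smul' := fun a A => (Matrix.smul_mulVec a A v) }
  have hL : Continuous L := LinearMap.continuous_of_finiteDimensional L
  have hsum : Summable fun k : ℕ => ((k.factorial : ℂ))⁻¹ • M ^ k :=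
    NormedSpace.expSeries_summable' (𝕂 := ℂ) M
  have hmapped := hsum.hasSum.map L hL
  rw [NormedSpace.exp_eq_tsum (𝕂 := ℂ)]
  have hmap : (fun k : ℕ => L (((k.factorial : ℂ))⁻¹ • M ^ k)) =
      fun k : ℕ => (((k.factorial : ℂ))⁻¹ * μ ^ k) • v := by
    funext k
    simp only [L, map_smul, LinearMap.coe_mk, AddHom.coe_mk]
    rw [hpow, smul_smul]
  have h2 : HasSum (fun k : ℕ => (((k.factorial : ℂ))⁻¹ * μ ^ k) • v)
      (L (∑' k : ℕ, ((k.factorial : ℂ))⁻¹ • M ^ k)) := by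
    rw [← hmap]; exact hmapped
  have h3 : HasSum (fun k : ℕ => (((k.factorial : ℂ))⁻¹ * μ ^ k) • v) (Complex.exp μ • v) := by
    have h4 : HasSum (fun k : ℕ => ((k.factorial : ℂ))⁻¹ * μ ^ k) (Complex.exp μ) := by
      have h5 := (NormedSpace.expSeries_summable' (𝕂 := ℂ) μ).hasSum
      rw [Complex.exp_eq_exp_ℂ, NormedSpace.exp_eq_tsum (𝕂 := ℂ)]
      simpa [smul_eq_mul] using h5
    exact h4.smul_const v
  exact h2.unique h3

private lemma vecMulVec_mulVec' {d : ℕ} (u v x : Fin d → ℂ) :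
    (Matrix.vecMulVec u v).mulVec x = (dotProduct v x) • u := by
  funext a
  simp [Matrix.mulVec, Matrix.vecMulVec, dotProduct, Finset.mul_sum, Finset.sum_mul,
    mul_assoc, mul_comm, mul_left_comm]

private lemma inn_sum_smul {d : ℕ} (w : Fin d → Fin d → ℂ)
    (horth : ∀ i j : Fin d, inn (w i) (w j) = if i = j then 1 else 0)
    (α β : Fin d → ℂ) :
    inn (∑ i, α i • w i) (∑ i, β i • w i) = ∑ i, (starRingEnd ℂ) (α i) * β i := by
  unfold inn
  have h1 : ∀ t, (starRingEnd ℂ) ((∑ i, α i • w i) t) * ((∑ i, β i • w i) t)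
      = ∑ i, ∑ j, (starRingEnd ℂ) (α i) * β j * ((starRingEnd ℂ) (w i t) * w j t) := by
    intro t
    simp only [Finset.sum_apply, Pi.smul_apply, smul_eq_mul, map_sum, map_mul,
      Finset.sum_mul_sum]
    exact Finset.sum_congr rfl fun i _ => Finset.sum_congr rfl fun j _ => by ring
  simp_rw [h1]
  rw [Finset.sum_comm]
  refine Finset.sum_congr rfl fun i _ => ?_
  rw [Finset.sum_comm]
  have h2 : ∀ j, (∑ t, (starRingEnd ℂ) (α i) * β j * ((starRingEnd ℂ) (w i t) * w j t))
      = (starRingEnd ℂ) (α i) * β j * inn (w i) (w j) := by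
    intro j; rw [inn, Finset.mul_sum]
  simp_rw [h2, horth]
  simp

private lemma sum_mulVec' {d : ℕ} {ι : Type*} (s : Finset ι) (A : ι → Matrix (Fin d) (Fin d) ℂ)
    (x : Fin d → ℂ) : (∑ i ∈ s, A i).mulVec x = ∑ i ∈ s, (A i).mulVec x := by
  funext a
  simp only [Matrix.mulVec, dotProduct, Matrix.sum_apply, Finset.sum_mul,
    Finset.sum_apply]
  rw [Finset.sum_comm]

private lemma mulVec_sum' {d : ℕ} {ι : Type*} (s : Finset ι) (A : Matrix (Fin d) (Fin d) ℂ)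
    (x : ι → Fin d → ℂ) : A.mulVec (∑ i ∈ s, x i) = ∑ i ∈ s, A.mulVec (x i) := by
  funext a
  simp only [Matrix.mulVec, dotProduct, Finset.sum_apply, Finset.mul_sum]
  rw [Finset.sum_comm]

private def aF {d n : ℕ} (f : Fin n → ℝ → ℝ) (c : Fin (d - 1) → Fin d → ℝ)
    (θ : Fin (d - 1) → ℝ) (i : Fin d) : ℝ := ∑ k, (∑ j, f j (θ k)) * c k i

/-- **Attainability condition for commuting dependent unitary channels.**
`⟨∂_m ψ_θ, ∂_{m'} ψ_θ⟩ = (δ_{m m'}/d)·g'(θ_m)²` with `g' = Σ_j f_j'`; in particular all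
these inner products are real, so Matsumoto's attainability condition holds. -/
theorem commuting_channels_attainability {d n : ℕ} (hd : 2 ≤ d)
    (w : Fin d → Fin d → ℂ)
    (horth : ∀ i j : Fin d, inn (w i) (w j) = if i = j then 1 else 0)
    (c : Fin (d - 1) → Fin d → ℝ)
    (hc0 : ∀ m, ∑ i, c m i = 0)
    (hcorth : ∀ m m', ∑ i, c m i * c m' i = if m = m' then 1 else 0)
    (f f' : Fin n → ℝ → ℝ)
    (hf : ∀ (j : Fin n) (s : ℝ), HasDerivAt (f j) (f' j s) s)
    (ψ : (Fin (d - 1) → ℝ) → (Fin d → ℂ))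
    (hψ : ∀ θ, ψ θ = (NormedSpace.exp
        (Complex.I • ∑ k, ((∑ j, f j (θ k) : ℝ) : ℂ) •
          (∑ i, (c k i : ℂ) • Matrix.vecMulVec (w i) (star (w i))))).mulVec
        (((1 / Real.sqrt d : ℝ) : ℂ) • ∑ k, w k))
    (Dψ : Fin (d - 1) → (Fin (d - 1) → ℝ) → (Fin d → ℂ))
    (hDψ : ∀ m θ, HasDerivAt (fun t => ψ (Function.update θ m t)) (Dψ m θ) (θ m)) :
    (∀ (θ : Fin (d - 1) → ℝ) (m m' : Fin (d - 1)),
      inn (Dψ m θ) (Dψ m' θ) =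
        if m = m' then (((1 / d) * (∑ j, f' j (θ m)) ^ 2 : ℝ) : ℂ) else 0) ∧
    (∀ (θ : Fin (d - 1) → ℝ) (m m' : Fin (d - 1)),
      (inn (Dψ m θ) (Dψ m' θ)).im = 0) := by
  -- Step 1: explicit formula for ψ
  have hψ2 : ∀ θ, ψ θ = ∑ i, (((1 / Real.sqrt d : ℝ) : ℂ) *
      Complex.exp (Complex.I * ((aF f c θ i : ℝ) : ℂ))) • w i := by
    intro θ
    rw [hψ]
    have heig : ∀ i₀ : Fin d,
        (Complex.I • ∑ k, ((∑ j, f j (θ k) : ℝ) : ℂ) •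
          (∑ i, (c k i : ℂ) • Matrix.vecMulVec (w i) (star (w i)))).mulVec (w i₀)
        = (Complex.I * ((aF f c θ i₀ : ℝ) : ℂ)) • w i₀ := by
      intro i₀
      have hT : ∀ k, ((∑ i, (c k i : ℂ) • Matrix.vecMulVec (w i) (star (w i))).mulVec (w i₀))
          = (c k i₀ : ℂ) • w i₀ := by
        intro k
        rw [sum_mulVec']
        have hterm : ∀ i, ((c k i : ℂ) • Matrix.vecMulVec (w i) (star (w i))).mulVec (w i₀)
            = ((c k i : ℂ) * inn (w i) (w i₀)) • w i := by
          intro i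
          rw [Matrix.smul_mulVec, vecMulVec_mulVec', smul_smul]
          congr 1
        simp_rw [hterm, horth]
        simp
      rw [Matrix.smul_mulVec, sum_mulVec']
      simp_rw [Matrix.smul_mulVec, hT, smul_smul]
      rw [← Finset.sum_smul, smul_smul]
      congr 1
      rw [aF]
      push_cast
      ring
    rw [Matrix.mulVec_smul, mulVec_sum']
    rw [Finset.sum_congr rfl fun k _ => exp_mulVec_eigen _ _ _ (heig k)]
    rw [Finset.smul_sum]
    exact Finset.sum_congr rfl fun i _ => (smul_smul _ _ _)
  -- Step 2: explicit formula for the derivative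
  have key : ∀ (θ : Fin (d - 1) → ℝ) (m : Fin (d - 1)), Dψ m θ =
      ∑ i, (((1 / Real.sqrt d : ℝ) : ℂ) *
        (Complex.I * ((((∑ j, f' j (θ m)) * c m i : ℝ)) : ℂ)) *
        Complex.exp (Complex.I * ((aF f c θ i : ℝ) : ℂ))) • w i := by
    intro θ m
    refine (hDψ m θ).unique ?_
    have hfun : (fun t => ψ (Function.update θ m t)) =
        fun t => ∑ i, (((1 / Real.sqrt d : ℝ) : ℂ) *
          Complex.exp (Complex.I * ((aF f c (Function.update θ m t) i : ℝ) : ℂ))) • w i :=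
      funext fun t => hψ2 _
    rw [hfun]
    refine HasDerivAt.fun_sum fun i _ => ?_
    refine HasDerivAt.smul_const ?_ (w i)
    have ha' : HasDerivAt (fun t => aF f c (Function.update θ m t) i)
        ((∑ j, f' j (θ m)) * c m i) (θ m) := by
      have hterm : ∀ k ∈ (Finset.univ : Finset (Fin (d - 1))),
          HasDerivAt (fun t => (∑ j, f j (Function.update θ m t k)) * c k i)
            (if k = m then (∑ j, f' j (θ m)) * c m i else 0) (θ m) := by
        intro k _
        by_cases hk : k = m
        · subst hk
          simp only [Function.update_self, if_pos rfl]
          exact (HasDerivAt.fun_sum fun j _ => hf j (θ k)).mul_const (c k i)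
        · simp only [Function.update_of_ne hk, if_neg hk]
          exact hasDerivAt_const _ _
      have h0 := HasDerivAt.fun_sum hterm
      have h1 : (∑ k, if k = m then (∑ j, f' j (θ m)) * c m i else 0)
          = (∑ j, f' j (θ m)) * c m i := by simp
      rw [h1] at h0
      exact h0
    have h1 : HasDerivAt (fun t => ((aF f c (Function.update θ m t) i : ℝ) : ℂ))
        ((((∑ j, f' j (θ m)) * c m i : ℝ)) : ℂ) (θ m) := ha'.ofReal_comp
    have h2 := h1.const_mul Complex.I
    have h3 := h2.cexp
    have h4 := h3.const_mul (((1 / Real.sqrt d : ℝ) : ℂ))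
    have h5 : Function.update θ m (θ m) = θ := Function.update_eq_self m θ
    rw [h5] at h4
    convert h4 using 1
    ring
  -- Step 3: the inner product computation
  have main : ∀ (θ : Fin (d - 1) → ℝ) (m m' : Fin (d - 1)),
      inn (Dψ m θ) (Dψ m' θ) =
        if m = m' then (((1 / d) * (∑ j, f' j (θ m)) ^ 2 : ℝ) : ℂ) else 0 := by
    intro θ m m'
    rw [key θ m, key θ m', inn_sum_smul w horth]
    have hE : ∀ x : ℝ, (starRingEnd ℂ) (Complex.exp (Complex.I * (x : ℂ))) *
        Complex.exp (Complex.I * (x : ℂ)) = 1 := by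
      intro x
      rw [← Complex.exp_conj, ← Complex.exp_add]
      simp [Complex.conj_ofReal]
    have hr : ((1 / Real.sqrt d : ℝ) : ℂ) * ((1 / Real.sqrt d : ℝ) : ℂ)
        = ((1 / (d : ℝ) : ℝ) : ℂ) := by
      rw [← Complex.ofReal_mul]
      congr 1
      rw [div_mul_div_comm, one_mul, Real.mul_self_sqrt (by positivity)]
    have hterm : ∀ i : Fin d,
        (starRingEnd ℂ) ((((1 / Real.sqrt d : ℝ) : ℂ) *
            (Complex.I * ((((∑ j, f' j (θ m)) * c m i : ℝ)) : ℂ)) *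
            Complex.exp (Complex.I * ((aF f c θ i : ℝ) : ℂ)))) *
          ((((1 / Real.sqrt d : ℝ) : ℂ) *
            (Complex.I * ((((∑ j, f' j (θ m')) * c m' i : ℝ)) : ℂ)) *
            Complex.exp (Complex.I * ((aF f c θ i : ℝ) : ℂ))))
        = ((1 / (d : ℝ) : ℝ) : ℂ) * ((∑ j, f' j (θ m) : ℝ) : ℂ) *
            ((∑ j, f' j (θ m') : ℝ) : ℂ) * (((c m i : ℝ)) : ℂ) * (((c m' i : ℝ)) : ℂ) := by
      intro i
      have hEi := hE (aF f c θ i)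
      have hI : Complex.I * Complex.I = -1 := Complex.I_mul_I
      simp only [map_mul, Complex.conj_ofReal, Complex.conj_I, Complex.ofReal_mul]
      linear_combination
        (-(((∑ j, f' j (θ m) : ℝ) : ℂ) * ((∑ j, f' j (θ m') : ℝ) : ℂ) *
          ((c m i : ℝ) : ℂ) * ((c m' i : ℝ) : ℂ) * ((1 / Real.sqrt d : ℝ) : ℂ) *
          ((1 / Real.sqrt d : ℝ) : ℂ) *
          (starRingEnd ℂ) (Complex.exp (Complex.I * ((aF f c θ i : ℝ) : ℂ))) *
          Complex.exp (Complex.I * ((aF f c θ i : ℝ) : ℂ)))) * hI +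
        (((∑ j, f' j (θ m) : ℝ) : ℂ) * ((∑ j, f' j (θ m') : ℝ) : ℂ) *
          ((c m i : ℝ) : ℂ) * ((c m' i : ℝ) : ℂ) * ((1 / Real.sqrt d : ℝ) : ℂ) *
          ((1 / Real.sqrt d : ℝ) : ℂ)) * hEi +
        (((∑ j, f' j (θ m) : ℝ) : ℂ) * ((∑ j, f' j (θ m') : ℝ) : ℂ) *
          ((c m i : ℝ) : ℂ) * ((c m' i : ℝ) : ℂ)) * hr
    rw [Finset.sum_congr rfl fun i _ => hterm i]
    have hcollect : (∑ i : Fin d, ((1 / (d : ℝ) : ℝ) : ℂ) * ((∑ j, f' j (θ m) : ℝ) : ℂ) *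
        ((∑ j, f' j (θ m') : ℝ) : ℂ) * (((c m i : ℝ)) : ℂ) * (((c m' i : ℝ)) : ℂ))
        = ((1 / (d : ℝ) : ℝ) : ℂ) * ((∑ j, f' j (θ m) : ℝ) : ℂ) *
          ((∑ j, f' j (θ m') : ℝ) : ℂ) * ((∑ i, c m i * c m' i : ℝ) : ℂ) := by
      have hcast : ((∑ i, c m i * c m' i : ℝ) : ℂ) = ∑ i, ((c m i : ℝ) : ℂ) * ((c m' i : ℝ) : ℂ) := by
        push_cast; rfl
      rw [hcast, Finset.mul_sum]
      exact Finset.sum_congr rfl fun i _ => by ring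
    rw [hcollect, hcorth]
    by_cases hmm : m = m'
    · subst hmm
      rw [if_pos rfl, if_pos rfl]
      push_cast
      ring
    · rw [if_neg hmm, if_neg hmm]
      simp
  exact ⟨main, fun θ m m' => by
    rw [main θ m m']
    split_ifs
    · exact Complex.ofReal_im _
    · rfl⟩
end
end
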